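/- Let S be a polynomial ring over a field k and I a homogeneous ideal of S. If for some odd integer σ > 1 the condition 'b ∈ S[t] and b^σ ∈ S[It,t^2] implies b ∈ S[It,t^2]' holds, then I is a radical ideal. -/

import Mathlib

open Polynomial

/-- The Rees-like algebra `S[It, t²]`: the `S`-subalgebra of `S[t]` generated by
`{f·t : f ∈ I}` and `t²`. -/
noncomputable def ReesLike (S : Type*) [CommRing S] (I : Ideal S) : Subalgebra S (Polynomial S) :=
  Algebra.adjoin S ({p : Polynomial S | ∃ a ∈ I, p = Polynomial.C a * Polynomial.X} ∪
    {Polynomial.X ^ 2})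

/-- The subalgebra of polynomials whose odd-degree coefficients lie in `I`. -/
noncomputable def OddCoeffIn (S : Type*) [CommRing S] (I : Ideal S) :
    Subalgebra S (Polynomial S) where
  carrier := {p | ∀ d : ℕ, Odd d → p.coeff d ∈ I}
  add_mem' {p q} hp hq d hd := by
    rw [Polynomial.coeff_add]; exact I.add_mem (hp d hd) (hq d hd)
  mul_mem' {p q} hp hq d hd := by
    rw [Polynomial.coeff_mul]
    refine Ideal.sum_mem _ fun x hx => ?_
    rw [Finset.HasAntidiagonal.mem_antidiagonal] at hx
    rcases Nat.even_or_odd x.1 with he | ho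
    · have : Odd x.2 := by
        rcases Nat.even_or_odd x.2 with h2 | h2
        · exact absurd (hx ▸ Even.add he h2) (Nat.not_even_iff_odd.mpr hd)
        · exact h2
      exact Ideal.mul_mem_left _ _ (hq _ this)
    · exact Ideal.mul_mem_right _ _ (hp _ ho)
  algebraMap_mem' r d hd := by
    show (Polynomial.C r).coeff d ∈ I
    rw [Polynomial.coeff_C, if_neg (by rintro rfl; exact (Nat.not_even_iff_odd.mpr hd) Even.zero)]
    exact I.zero_mem

theorem reesLike_le_oddCoeffIn (S : Type*) [CommRing S] (I : Ideal S) :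
    ReesLike S I ≤ OddCoeffIn S I := by
  apply Algebra.adjoin_le
  rintro p (⟨a, ha, rfl⟩ | hp)
  · intro d hd
    rw [Polynomial.coeff_C_mul, Polynomial.coeff_X]
    split
    · simpa using ha
    · simp
  · simp only [Set.mem_singleton_iff] at hp
    subst hp
    intro d hd
    rw [Polynomial.coeff_X_pow, if_neg (by rintro rfl; exact (Nat.not_even_iff_odd.mpr hd) (by norm_num))]
    exact I.zero_mem

theorem pow_mem_reesLike (S : Type*) [CommRing S] (I : Ideal S) (a : S) (N : ℕ)
    (hN : Odd N) (ha : a ^ N ∈ I) :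
    (Polynomial.C a * Polynomial.X) ^ N ∈ ReesLike S I := by
  obtain ⟨j, hj⟩ := hN
  have heq : (Polynomial.C a * Polynomial.X) ^ N
      = (Polynomial.C (a ^ N) * Polynomial.X) * (Polynomial.X ^ 2) ^ j := by
    rw [mul_pow, ← Polynomial.C_pow, hj]
    ring
  rw [heq]
  have h1 : Polynomial.C (a ^ N) * Polynomial.X ∈ ReesLike S I :=
    Algebra.subset_adjoin (Set.mem_union_left _ ⟨a ^ N, ha, rfl⟩)
  have h2 : (Polynomial.X : Polynomial S) ^ 2 ∈ ReesLike S I :=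
    Algebra.subset_adjoin (Set.mem_union_right _ rfl)
  exact mul_mem h1 (pow_mem h2 j)

/-- **Theorem (RLseminormal, (4) ⇒ (1)).** Let `S = k[x 1, …, x n]` and `I` a homogeneous ideal.
If for some odd integer `σ > 1` every `b ∈ S[t]` with `b^σ ∈ S[It,t²]` lies in `S[It,t²]`,
then `I` is radical. -/
theorem isRadical_of_odd_power_condition
    (k : Type*) [Field k] (n : ℕ) (I : Ideal (MvPolynomial (Fin n) k))
    (hhom : ∀ p ∈ I, ∀ d : ℕ, MvPolynomial.homogeneousComponent d p ∈ I)
    (σ : ℕ) (hσ : 1 < σ) (hodd : Odd σ)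
    (hcond : ∀ b : Polynomial (MvPolynomial (Fin n) k),
      b ^ σ ∈ ReesLike (MvPolynomial (Fin n) k) I → b ∈ ReesLike (MvPolynomial (Fin n) k) I) :
    I.IsRadical := by
  intro a ha
  obtain ⟨m, hm⟩ := ha
  -- find K with σ^K ≥ max m 1
  obtain ⟨K, hK⟩ := pow_unbounded_of_one_lt (max m 1) hσ
  have hK' : max m 1 ≤ σ ^ K := le_of_lt hK
  have hm' : m ≤ σ ^ K := le_trans (le_max_left _ _) hK'
  have h1 : 1 ≤ σ ^ K := le_trans (le_max_right _ _) hK'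
  have haK : a ^ (σ ^ K) ∈ I := by
    have : a ^ (σ ^ K) = a ^ m * a ^ (σ ^ K - m) := by
      rw [← pow_add, Nat.add_sub_cancel' hm']
    rw [this]
    exact I.mul_mem_right _ hm
  -- (C a * X)^(σ^K) ∈ ReesLike
  have hoddK : Odd (σ ^ K) := hodd.pow
  have hbK : (Polynomial.C a * Polynomial.X) ^ (σ ^ K) ∈ ReesLike (MvPolynomial (Fin n) k) I :=
    pow_mem_reesLike _ I a _ hoddK haK
  -- descend: for all j, (C a * X)^(σ^j) ∈ RL → C a * X ∈ RL
  have key : ∀ j : ℕ, (Polynomial.C a * Polynomial.X) ^ (σ ^ j) ∈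
      ReesLike (MvPolynomial (Fin n) k) I →
      Polynomial.C a * Polynomial.X ∈ ReesLike (MvPolynomial (Fin n) k) I := by
    intro j
    induction j with
    | zero => simpa using id
    | succ j ih =>
      intro h
      apply ih
      apply hcond
      rwa [← pow_mul, ← pow_succ]
  have hb : Polynomial.C a * Polynomial.X ∈ ReesLike (MvPolynomial (Fin n) k) I := key K hbK
  have := reesLike_le_oddCoeffIn _ I hb 1 odd_one
  simpa using this
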